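/- Let b > 1, γ > −1, and suppose a random variable f has tail T_f(y) ≤ y^{−b} (ln y)^γ for all y ≥ e. Then there is a constant C = C(b,γ) such that for all p ∈ [1, b), |f|_p ≤ C · (b − p)^{−(γ+1)/b}. -/

import Mathlib

open MeasureTheory Real


lemma aux_tail (γ : ℝ) (hγ : -1 < γ) (s q : ℝ) (hs : 0 < s) (hs1 : s ≤ 1) (hq : q ≤ -1 - s) :
    ∫⁻ y in Set.Ioi (Real.exp 1), ENNReal.ofReal (y ^ q * Real.log y ^ γ)
      ≤ ENNReal.ofReal ((2 * |(2*γ) ^ γ| + (1/(γ+1) + 1)) * s ^ (-(γ+1))) := by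
  have hγ1 : (0:ℝ) < γ + 1 := by linarith
  have hE1 : (1:ℝ) ≤ Real.exp 1 := by
    have := Real.exp_le_exp.mpr (zero_le_one (α := ℝ)); rwa [Real.exp_zero] at this
  have hE0 : (0:ℝ) < Real.exp 1 := Real.exp_pos 1
  have hspow : (0:ℝ) < s ^ (-(γ+1)) := Real.rpow_pos_of_pos hs _
  rcases le_or_gt 0 γ with hγ0 | hγ0
  · -- case γ ≥ 0
    set c : ℝ := (2*γ) ^ γ * s ^ (-γ) with hc_def
    have hcnn : 0 ≤ c := mul_nonneg (Real.rpow_nonneg (by linarith) _) (Real.rpow_nonneg hs.le _)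
    have hdom : ∀ y ∈ Set.Ioi (Real.exp 1),
        ENNReal.ofReal (y ^ q * Real.log y ^ γ) ≤ ENNReal.ofReal (c * y ^ (-1 - s/2)) := by
      intro y hy
      apply ENNReal.ofReal_le_ofReal
      have hy1 : (1:ℝ) ≤ y := hE1.trans (le_of_lt hy)
      have hy0 : (0:ℝ) < y := lt_of_lt_of_le one_pos hy1
      have hL1 : (1:ℝ) ≤ Real.log y := by
        have := Real.log_le_log hE0 (le_of_lt hy)
        rwa [Real.log_exp] at this
      have hL0 : (0:ℝ) < Real.log y := lt_of_lt_of_le one_pos hL1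
      have step1 : y ^ q ≤ y ^ (-1 - s) :=
        Real.rpow_le_rpow_of_exponent_le hy1 (by linarith)
      have step2 : Real.log y ^ γ ≤ (2*γ) ^ γ * s ^ (-γ) * y ^ (s/2) := by
        set u : ℝ := s * Real.log y with hu_def
        have hu0 : 0 < u := mul_pos hs hL0
        rcases eq_or_lt_of_le hγ0 with h0 | hγpos
        · rw [← h0]
          simp only [Real.rpow_zero, mul_zero, neg_zero, one_mul]
          exact Real.one_le_rpow hy1 (by linarith)
        · have hv : u / (2*γ) ≤ Real.exp (u / (2*γ)) :=
            (le_add_of_nonneg_right zero_le_one).trans (Real.add_one_le_exp _)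
          have h1 : u ≤ 2*γ * Real.exp (u/(2*γ)) := by
            have h2γ : (0:ℝ) < 2*γ := by linarith
            have hmul := mul_le_mul_of_nonneg_left hv h2γ.le
            have heq : 2*γ * (u/(2*γ)) = u := by
              rw [mul_comm]; exact div_mul_cancel₀ u (ne_of_gt h2γ)
            linarith
          have hLu : Real.log y = u / s := by field_simp [hu_def]; rw [hu_def]; ring
          rw [hLu, Real.div_rpow hu0.le hs.le]
          have hupow : u ^ γ ≤ (2*γ) ^ γ * Real.exp (u/2) := by
            calc u ^ γ ≤ (2*γ * Real.exp (u/(2*γ))) ^ γ :=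
                  Real.rpow_le_rpow hu0.le h1 hγ0
            _ = (2*γ) ^ γ * (Real.exp (u/(2*γ))) ^ γ :=
                  Real.mul_rpow (by linarith) (Real.exp_pos _).le
            _ = (2*γ) ^ γ * Real.exp (u/2) := by
                  rw [Real.rpow_def_of_pos (Real.exp_pos _), Real.log_exp]
                  congr 2
                  field_simp
          have hexp : Real.exp (u/2) = y ^ (s/2) := by
            rw [Real.rpow_def_of_pos hy0, hu_def]; ring_nf
          calc u ^ γ / s ^ γ ≤ ((2*γ) ^ γ * Real.exp (u/2)) / s ^ γ := by
                apply div_le_div_of_nonneg_right hupow (Real.rpow_pos_of_pos hs γ).le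
          _ = (2*γ) ^ γ * s ^ (-γ) * y ^ (s/2) := by
                rw [Real.rpow_neg hs.le, hexp]; ring
      calc y ^ q * Real.log y ^ γ ≤ y ^ (-1-s) * ((2*γ) ^ γ * s ^ (-γ) * y ^ (s/2)) := by
            apply mul_le_mul step1 step2 (Real.rpow_nonneg hL0.le _) (Real.rpow_nonneg hy0.le _)
      _ = c * y ^ (-1 - s/2) := by
            rw [hc_def, show (-1 - s/2 : ℝ) = (-1-s) + s/2 by ring, Real.rpow_add hy0]
            ring
    have hint : IntegrableOn (fun y => c * y ^ (-1 - s/2)) (Set.Ioi (Real.exp 1)) volume := by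
      exact (integrableOn_Ioi_rpow_of_lt (by linarith) hE0).const_mul c
    have hnn : 0 ≤ᵐ[volume.restrict (Set.Ioi (Real.exp 1))] fun y => c * y ^ (-1 - s/2) := by
      refine (ae_restrict_iff' measurableSet_Ioi).mpr (Filter.Eventually.of_forall fun y hy => ?_)
      have hy0 : (0:ℝ) < y := lt_of_lt_of_le hE0 (le_of_lt hy)
      positivity
    calc ∫⁻ y in Set.Ioi (Real.exp 1), ENNReal.ofReal (y ^ q * Real.log y ^ γ)
        ≤ ∫⁻ y in Set.Ioi (Real.exp 1), ENNReal.ofReal (c * y ^ (-1 - s/2)) :=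
          setLIntegral_mono' measurableSet_Ioi hdom
    _ = ENNReal.ofReal (∫ y in Set.Ioi (Real.exp 1), c * y ^ (-1 - s/2)) :=
          (ofReal_integral_eq_lintegral_ofReal hint hnn).symm
    _ ≤ ENNReal.ofReal ((2 * |(2*γ) ^ γ| + (1/(γ+1) + 1)) * s ^ (-(γ+1))) := by
          apply ENNReal.ofReal_le_ofReal
          rw [MeasureTheory.integral_const_mul, integral_Ioi_rpow_of_lt (by linarith) hE0]
          have hEpow : Real.exp 1 ^ (-1 - s/2 + 1) ≤ 1 :=
            Real.rpow_le_one_of_one_le_of_nonpos hE1 (by linarith)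
          have hEpow0 : (0:ℝ) ≤ Real.exp 1 ^ (-1 - s/2 + 1) := Real.rpow_nonneg hE0.le _
          have key : c * (-(Real.exp 1 ^ (-1 - s/2 + 1)) / (-1 - s/2 + 1))
              ≤ 2 * (2*γ) ^ γ * s ^ (-(γ+1)) := by
            have h1 : -(Real.exp 1 ^ (-1 - s/2 + 1)) / (-1 - s/2 + 1)
                = Real.exp 1 ^ (-1 - s/2 + 1) * (2/s) := by
              rw [show (-1 - s/2 + 1 : ℝ) = -(s/2) by ring, neg_div_neg_eq,
                div_eq_mul_inv, inv_div]
            rw [h1, hc_def]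
            have h2 : s ^ (-γ) * (2/s) = 2 * s ^ (-(γ+1)) := by
              rw [show -(γ+1) = -γ + (-1) by ring, Real.rpow_add hs, Real.rpow_neg_one]
              field_simp
            calc (2*γ) ^ γ * s ^ (-γ) * (Real.exp 1 ^ (-1 - s/2 + 1) * (2/s))
                ≤ (2*γ) ^ γ * s ^ (-γ) * (1 * (2/s)) := by
                  apply mul_le_mul_of_nonneg_left _ hcnn
                  apply mul_le_mul_of_nonneg_right hEpow (by positivity)
            _ = 2 * (2*γ) ^ γ * s ^ (-(γ+1)) := by
                  rw [one_mul, mul_assoc, h2]; ring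
          have hrest : 0 ≤ (1/(γ+1) + 1) * s ^ (-(γ+1)) := by positivity
          have habs2 : |(2*γ) ^ γ| = (2*γ) ^ γ :=
            abs_of_nonneg (Real.rpow_nonneg (by linarith : (0:ℝ) ≤ 2*γ) γ)
          nlinarith [key, habs2]
  · -- case γ < 0
    set Y : ℝ := Real.exp (1/s) with hY_def
    have hsinv0 : (0:ℝ) < 1/s := by positivity
    have hsinv : (1:ℝ) ≤ 1/s := by rw [le_div_iff₀ hs]; linarith
    have hEY : Real.exp 1 ≤ Y := Real.exp_le_exp.mpr hsinv
    have hY0 : (0:ℝ) < Y := Real.exp_pos _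
    have hlogY : Real.log Y = 1/s := Real.log_exp _
    have habs : (0:ℝ) ≤ |(2*γ) ^ γ| := abs_nonneg _
    rw [← Set.Ioc_union_Ioi_eq_Ioi hEY, lintegral_union measurableSet_Ioi Set.Ioc_disjoint_Ioi_same]
    have hp1 : ∫⁻ y in Set.Ioc (Real.exp 1) Y, ENNReal.ofReal (y ^ q * Real.log y ^ γ)
        ≤ ENNReal.ofReal ((1/(γ+1)) * s ^ (-(γ+1))) := by
      have hdom : ∀ y ∈ Set.Ioc (Real.exp 1) Y,
          ENNReal.ofReal (y ^ q * Real.log y ^ γ)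
            ≤ ENNReal.ofReal (Real.log y ^ γ * y⁻¹) := by
        intro y hy
        apply ENNReal.ofReal_le_ofReal
        have hy1 : (1:ℝ) ≤ y := hE1.trans hy.1.le
        have hy0 : (0:ℝ) < y := lt_of_lt_of_le one_pos hy1
        have hL1 : (1:ℝ) ≤ Real.log y := by
          have := Real.log_le_log hE0 hy.1.le
          rwa [Real.log_exp] at this
        have step1 : y ^ q ≤ y⁻¹ := by
          rw [← Real.rpow_neg_one y]
          exact Real.rpow_le_rpow_of_exponent_le hy1 (by linarith)
        rw [mul_comm (Real.log y ^ γ)]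
        exact mul_le_mul_of_nonneg_right step1 (Real.rpow_nonneg (by linarith) γ)
      have hderiv : ∀ x ∈ Set.uIcc (Real.exp 1) Y,
          HasDerivAt (fun t => Real.log t ^ (γ+1) / (γ+1)) (Real.log x ^ γ * x⁻¹) x := by
        intro x hx
        rw [Set.uIcc_of_le hEY] at hx
        have hx0 : (0:ℝ) < x := lt_of_lt_of_le hE0 hx.1
        have hlx : (1:ℝ) ≤ Real.log x := by
          have := Real.log_le_log hE0 hx.1
          rwa [Real.log_exp] at this
        have h := ((Real.hasDerivAt_log hx0.ne').rpow_const (p := γ+1)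
          (Or.inl (by linarith : Real.log x ≠ 0))).div_const (γ+1)
        refine h.congr_deriv ?_
        rw [show γ + 1 - 1 = γ by ring]
        field_simp
      have hcont : ContinuousOn (fun y => Real.log y ^ γ * y⁻¹) (Set.uIcc (Real.exp 1) Y) := by
        rw [Set.uIcc_of_le hEY]
        apply ContinuousOn.mul
        · apply ContinuousOn.rpow_const
          · exact Real.continuousOn_log.mono fun x hx =>
              ne_of_gt (lt_of_lt_of_le hE0 hx.1)
          · intro x hx
            left
            have := Real.log_le_log hE0 hx.1
            rw [Real.log_exp] at this
            linarith
        · exact ContinuousOn.inv₀ continuousOn_id fun x hx =>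
            ne_of_gt (lt_of_lt_of_le hE0 hx.1)
      have hii : IntervalIntegrable (fun y => Real.log y ^ γ * y⁻¹) volume (Real.exp 1) Y :=
        hcont.intervalIntegrable
      have hFTC := intervalIntegral.integral_eq_sub_of_hasDerivAt hderiv hii
      rw [intervalIntegral.integral_of_le hEY] at hFTC
      have hint : IntegrableOn (fun y => Real.log y ^ γ * y⁻¹) (Set.Ioc (Real.exp 1) Y) volume := by
        rw [intervalIntegrable_iff_integrableOn_Ioc_of_le hEY] at hii
        exact hii
      have hnn : 0 ≤ᵐ[volume.restrict (Set.Ioc (Real.exp 1) Y)]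
          fun y => Real.log y ^ γ * y⁻¹ := by
        refine (ae_restrict_iff' measurableSet_Ioc).mpr (Filter.Eventually.of_forall fun y hy => ?_)
        have hy0 : (0:ℝ) < y := lt_of_lt_of_le hE0 hy.1.le
        have hL0 : (0:ℝ) ≤ Real.log y := by
          have := Real.log_le_log hE0 hy.1.le
          rw [Real.log_exp] at this; linarith
        positivity
      calc ∫⁻ y in Set.Ioc (Real.exp 1) Y, ENNReal.ofReal (y ^ q * Real.log y ^ γ)
          ≤ ∫⁻ y in Set.Ioc (Real.exp 1) Y, ENNReal.ofReal (Real.log y ^ γ * y⁻¹) :=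
            setLIntegral_mono' measurableSet_Ioc hdom
      _ = ENNReal.ofReal (∫ y in Set.Ioc (Real.exp 1) Y, Real.log y ^ γ * y⁻¹) :=
            (ofReal_integral_eq_lintegral_ofReal hint hnn).symm
      _ ≤ ENNReal.ofReal ((1/(γ+1)) * s ^ (-(γ+1))) := by
            apply ENNReal.ofReal_le_ofReal
            rw [hFTC, hlogY, Real.log_exp]
            have h1 : (1/s : ℝ) ^ (γ+1) = (s ^ (γ+1))⁻¹ := by
              rw [one_div, Real.inv_rpow hs.le]
            have h2 : s ^ (-(γ+1)) = (s ^ (γ+1))⁻¹ := Real.rpow_neg hs.le _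
            have h3 : (1/(γ+1)) * (s ^ (γ+1))⁻¹ = (s ^ (γ+1))⁻¹ / (γ+1) := by ring
            have h4 : (0:ℝ) < 1/(γ+1) := by positivity
            rw [h1, Real.one_rpow, h2, h3]
            linarith
    have hp2 : ∫⁻ y in Set.Ioi Y, ENNReal.ofReal (y ^ q * Real.log y ^ γ)
        ≤ ENNReal.ofReal (1 * s ^ (-(γ+1))) := by
      have hdom : ∀ y ∈ Set.Ioi Y,
          ENNReal.ofReal (y ^ q * Real.log y ^ γ)
            ≤ ENNReal.ofReal (s ^ (-γ) * y ^ (-1-s)) := by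
        intro y hy
        apply ENNReal.ofReal_le_ofReal
        have hy1 : (1:ℝ) ≤ y := hE1.trans (hEY.trans (le_of_lt hy))
        have hy0 : (0:ℝ) < y := lt_of_lt_of_le one_pos hy1
        have hLY : 1/s ≤ Real.log y := by
          have := Real.log_le_log hY0 (le_of_lt hy)
          rwa [hlogY] at this
        have step1 : y ^ q ≤ y ^ (-1-s) :=
          Real.rpow_le_rpow_of_exponent_le hy1 (by linarith)
        have step2 : Real.log y ^ γ ≤ s ^ (-γ) := by
          have h := Real.rpow_le_rpow_of_nonpos hsinv0 hLY hγ0.le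
          calc Real.log y ^ γ ≤ (1/s) ^ γ := h
          _ = s ^ (-γ) := by rw [one_div, Real.inv_rpow hs.le, ← Real.rpow_neg hs.le]
        have hL0 : (0:ℝ) ≤ Real.log y := le_trans hsinv0.le hLY
        rw [mul_comm (s ^ (-γ))]
        exact mul_le_mul step1 step2 (Real.rpow_nonneg hL0 γ)
          (Real.rpow_nonneg hy0.le _)
      have hint : IntegrableOn (fun y => s ^ (-γ) * y ^ (-1-s)) (Set.Ioi Y) volume :=
        (integrableOn_Ioi_rpow_of_lt (by linarith) hY0).const_mul _
      have hnn : 0 ≤ᵐ[volume.restrict (Set.Ioi Y)] fun y => s ^ (-γ) * y ^ (-1-s) := by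
        refine (ae_restrict_iff' measurableSet_Ioi).mpr (Filter.Eventually.of_forall fun y hy => ?_)
        have hy0 : (0:ℝ) < y := lt_of_lt_of_le hY0 (le_of_lt hy)
        positivity
      calc ∫⁻ y in Set.Ioi Y, ENNReal.ofReal (y ^ q * Real.log y ^ γ)
          ≤ ∫⁻ y in Set.Ioi Y, ENNReal.ofReal (s ^ (-γ) * y ^ (-1-s)) :=
            setLIntegral_mono' measurableSet_Ioi hdom
      _ = ENNReal.ofReal (∫ y in Set.Ioi Y, s ^ (-γ) * y ^ (-1-s)) :=
            (ofReal_integral_eq_lintegral_ofReal hint hnn).symm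
      _ ≤ ENNReal.ofReal (1 * s ^ (-(γ+1))) := by
            apply ENNReal.ofReal_le_ofReal
            rw [MeasureTheory.integral_const_mul, integral_Ioi_rpow_of_lt (by linarith) hY0]
            have hYs : Y ^ (-1-s+1) ≤ 1 := by
              rw [show (-1-s+1:ℝ) = -s by ring]
              exact Real.rpow_le_one_of_one_le_of_nonpos (hE1.trans hEY) (by linarith)
            have hYs0 : (0:ℝ) ≤ Y ^ (-1-s+1) := Real.rpow_nonneg hY0.le _
            have h1 : -(Y ^ (-1-s+1)) / (-1-s+1) = Y ^ (-1-s+1) * (1/s) := by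
              rw [show (-1-s+1:ℝ) = -s by ring, ← neg_div_neg_eq, neg_neg, neg_neg,
                div_eq_mul_inv, one_div]
            have h2 : s ^ (-γ) * (1/s) = s ^ (-(γ+1)) := by
              rw [show -(γ+1) = -γ + (-1) by ring, Real.rpow_add hs, Real.rpow_neg_one, one_div]
            rw [h1, one_mul]
            calc s ^ (-γ) * (Y ^ (-1-s+1) * (1/s)) ≤ s ^ (-γ) * (1 * (1/s)) := by
                  apply mul_le_mul_of_nonneg_left _ (Real.rpow_nonneg hs.le _)
                  exact mul_le_mul_of_nonneg_right hYs (by positivity)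
            _ = s ^ (-(γ+1)) := by rw [one_mul, h2]
    calc (∫⁻ y in Set.Ioc (Real.exp 1) Y, ENNReal.ofReal (y ^ q * Real.log y ^ γ))
          + ∫⁻ y in Set.Ioi Y, ENNReal.ofReal (y ^ q * Real.log y ^ γ)
        ≤ ENNReal.ofReal ((1/(γ+1)) * s ^ (-(γ+1))) + ENNReal.ofReal (1 * s ^ (-(γ+1))) :=
          add_le_add hp1 hp2
    _ = ENNReal.ofReal ((1/(γ+1)) * s ^ (-(γ+1)) + 1 * s ^ (-(γ+1))) :=
          (ENNReal.ofReal_add (by positivity) (by positivity)).symm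
    _ ≤ ENNReal.ofReal ((2 * |(2*γ) ^ γ| + (1/(γ+1) + 1)) * s ^ (-(γ+1))) := by
          apply ENNReal.ofReal_le_ofReal
          nlinarith [hspow, habs]


lemma neg_mul_log_le_one {x : ℝ} (h : 0 < x) : -(x * Real.log x) ≤ 1 := by
  have h2 := Real.log_le_sub_one_of_pos (inv_pos.mpr h)
  rw [Real.log_inv] at h2
  nlinarith [mul_le_mul_of_nonneg_left h2 h.le, mul_inv_cancel₀ h.ne']

set_option maxHeartbeats 1000000 in
/-- a power-logarithmic tail `T_f(y) ≤ y^{−b}(ln y)^γ` (`y ≥ e`)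
implies the moment blow-up bound `|f|_p ≤ C(b,γ)·(b−p)^{−(γ+1)/b}` for
`p ∈ [1,b)`, with a constant depending only on `b, γ`. -/
theorem stmt_14 (b γ : ℝ) (hb : 1 < b) (hγ : -1 < γ) :
    ∃ C : ℝ, 0 < C ∧
      ∀ (Ω : Type) (_ : MeasurableSpace Ω) (P : Measure Ω),
        IsProbabilityMeasure P →
        ∀ (f : Ω → ℝ), Measurable f →
        (∀ y : ℝ, Real.exp 1 ≤ y →
          max ((P {ω | y ≤ f ω}).toReal) ((P {ω | f ω ≤ -y}).toReal)
            ≤ y ^ (-b) * (Real.log y) ^ γ) →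
        ∀ p : ℝ, 1 ≤ p → p < b →
          (∫ ω, |f ω| ^ p ∂P) ^ (1/p) ≤ C * (b - p) ^ (-(γ + 1) / b) := by
  have hγ1 : (0:ℝ) < γ + 1 := by linarith
  have hE1 : (1:ℝ) ≤ Real.exp 1 := by
    have := Real.exp_le_exp.mpr (zero_le_one (α := ℝ)); rwa [Real.exp_zero] at this
  have hE0 : (0:ℝ) < Real.exp 1 := Real.exp_pos 1
  set A : ℝ := 2 * |(2*γ) ^ γ| + (1/(γ+1) + 1) with hA_def
  have hA : 0 < A := by positivity
  have hEb1 : (1:ℝ) ≤ Real.exp 1 ^ b := Real.one_le_rpow hE1 (by linarith)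
  set K : ℝ := b * (Real.exp 1 ^ b + 2 * A) with hK_def
  have hK1 : 1 ≤ K := by nlinarith
  set D : ℝ := max (Real.exp (γ+1)) (max 1 ((b-1) ^ ((γ+1)/b))) with hD_def
  have hD1 : 1 ≤ D := le_trans (le_max_left _ _) (le_max_right _ _)
  refine ⟨K * D, by nlinarith, ?_⟩
  intro Ω inst P hP f hf htail p hp1 hpb
  have hp0 : 0 < p := lt_of_lt_of_le one_pos hp1
  have hx0 : 0 < b - p := by linarith
  set s : ℝ := min (b - p) 1 with hs_def
  have hs0 : 0 < s := lt_min hx0 one_pos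
  have hs1 : s ≤ 1 := min_le_right _ _
  have hsbp : s ≤ b - p := min_le_left _ _
  have hspow1 : (1:ℝ) ≤ s ^ (-(γ+1)) := by
    calc (1:ℝ) = s ^ (0:ℝ) := (Real.rpow_zero s).symm
    _ ≤ s ^ (-(γ+1)) := Real.rpow_le_rpow_of_exponent_ge hs0 hs1 (by linarith)
  -- layer cake
  have habs_nn : 0 ≤ᵐ[P] fun ω => |f ω| := Filter.Eventually.of_forall fun ω => abs_nonneg _
  have hlayer := lintegral_rpow_eq_lintegral_meas_le_mul P habs_nn hf.abs.aemeasurable hp0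
  -- split the t-integral
  have hsplit : ∫⁻ t in Set.Ioi (0:ℝ), P {a | t ≤ |f a|} * ENNReal.ofReal (t ^ (p-1))
      = (∫⁻ t in Set.Ioc 0 (Real.exp 1), P {a | t ≤ |f a|} * ENNReal.ofReal (t ^ (p-1)))
        + ∫⁻ t in Set.Ioi (Real.exp 1), P {a | t ≤ |f a|} * ENNReal.ofReal (t ^ (p-1)) := by
    rw [← Set.Ioc_union_Ioi_eq_Ioi hE0.le,
      lintegral_union measurableSet_Ioi Set.Ioc_disjoint_Ioi_same]
  -- first piece
  have hI1 : ∫⁻ t in Set.Ioc 0 (Real.exp 1), P {a | t ≤ |f a|} * ENNReal.ofReal (t ^ (p-1))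
      ≤ ENNReal.ofReal (Real.exp 1 ^ b) := by
    calc ∫⁻ t in Set.Ioc 0 (Real.exp 1), P {a | t ≤ |f a|} * ENNReal.ofReal (t ^ (p-1))
        ≤ ∫⁻ _ in Set.Ioc 0 (Real.exp 1), ENNReal.ofReal (Real.exp 1 ^ (p-1)) := by
          apply setLIntegral_mono' measurableSet_Ioc
          intro t ht
          calc P {a | t ≤ |f a|} * ENNReal.ofReal (t ^ (p-1))
              ≤ 1 * ENNReal.ofReal (Real.exp 1 ^ (p-1)) :=
                mul_le_mul' prob_le_one
                  (ENNReal.ofReal_le_ofReal (Real.rpow_le_rpow ht.1.le ht.2 (by linarith)))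
          _ = ENNReal.ofReal (Real.exp 1 ^ (p-1)) := one_mul _
    _ = ENNReal.ofReal (Real.exp 1 ^ (p-1)) * volume (Set.Ioc (0:ℝ) (Real.exp 1)) :=
          setLIntegral_const _ _
    _ = ENNReal.ofReal (Real.exp 1 ^ (p-1)) * ENNReal.ofReal (Real.exp 1) := by
          rw [Real.volume_Ioc, sub_zero]
    _ = ENNReal.ofReal (Real.exp 1 ^ (p-1) * Real.exp 1) :=
          (ENNReal.ofReal_mul (Real.rpow_nonneg hE0.le _)).symm
    _ ≤ ENNReal.ofReal (Real.exp 1 ^ b) := by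
          apply ENNReal.ofReal_le_ofReal
          rw [← Real.rpow_add_one hE0.ne' (p-1)]
          exact Real.rpow_le_rpow_of_exponent_le hE1 (by linarith)
  -- second piece
  have hI2 : ∫⁻ t in Set.Ioi (Real.exp 1), P {a | t ≤ |f a|} * ENNReal.ofReal (t ^ (p-1))
      ≤ ENNReal.ofReal (2 * (A * s ^ (-(γ+1)))) := by
    have hpt : ∀ t ∈ Set.Ioi (Real.exp 1),
        P {a | t ≤ |f a|} * ENNReal.ofReal (t ^ (p-1))
          ≤ ENNReal.ofReal (2 * (t ^ (p-1-b) * Real.log t ^ γ)) := by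
      intro t ht
      have ht' : Real.exp 1 ≤ t := le_of_lt ht
      have ht0 : (0:ℝ) < t := lt_of_lt_of_le hE0 ht'
      have hL0 : (0:ℝ) ≤ Real.log t := by
        have := Real.log_le_log hE0 ht'
        rw [Real.log_exp] at this; linarith
      have htb : (0:ℝ) ≤ t ^ (-b) * Real.log t ^ γ :=
        mul_nonneg (Real.rpow_nonneg ht0.le _) (Real.rpow_nonneg hL0 _)
      have hmeas : P {a | t ≤ |f a|} ≤ ENNReal.ofReal (2 * (t ^ (-b) * Real.log t ^ γ)) := by
        have hsub : {a | t ≤ |f a|} ⊆ {ω | t ≤ f ω} ∪ {ω | f ω ≤ -t} := by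
          intro a ha
          have ha' : t ≤ |f a| := ha
          rcases le_abs.mp ha' with h | h
          · exact Or.inl (show t ≤ f a from h)
          · exact Or.inr (show f a ≤ -t by linarith)
        have h1 := htail t ht'
        have hb1 : (P {ω | t ≤ f ω}).toReal ≤ t ^ (-b) * Real.log t ^ γ :=
          le_trans (le_max_left _ _) h1
        have hb2 : (P {ω | f ω ≤ -t}).toReal ≤ t ^ (-b) * Real.log t ^ γ :=
          le_trans (le_max_right _ _) h1
        calc P {a | t ≤ |f a|} ≤ P ({ω | t ≤ f ω} ∪ {ω | f ω ≤ -t}) := measure_mono hsub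
        _ ≤ P {ω | t ≤ f ω} + P {ω | f ω ≤ -t} := measure_union_le _ _
        _ ≤ ENNReal.ofReal (t ^ (-b) * Real.log t ^ γ)
              + ENNReal.ofReal (t ^ (-b) * Real.log t ^ γ) := by
            apply add_le_add
            · rw [← ENNReal.ofReal_toReal (measure_ne_top P _)]
              exact ENNReal.ofReal_le_ofReal hb1
            · rw [← ENNReal.ofReal_toReal (measure_ne_top P _)]
              exact ENNReal.ofReal_le_ofReal hb2
        _ = ENNReal.ofReal (2 * (t ^ (-b) * Real.log t ^ γ)) := by
            rw [← ENNReal.ofReal_add htb htb]; congr 1; ring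
      calc P {a | t ≤ |f a|} * ENNReal.ofReal (t ^ (p-1))
          ≤ ENNReal.ofReal (2 * (t ^ (-b) * Real.log t ^ γ)) * ENNReal.ofReal (t ^ (p-1)) :=
            mul_le_mul' hmeas le_rfl
      _ = ENNReal.ofReal (2 * (t ^ (-b) * Real.log t ^ γ) * t ^ (p-1)) :=
            (ENNReal.ofReal_mul (by positivity)).symm
      _ = ENNReal.ofReal (2 * (t ^ (p-1-b) * Real.log t ^ γ)) := by
            congr 1
            rw [show p-1-b = -b + (p-1) by ring, Real.rpow_add ht0]
            ring
    calc ∫⁻ t in Set.Ioi (Real.exp 1), P {a | t ≤ |f a|} * ENNReal.ofReal (t ^ (p-1))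
        ≤ ∫⁻ t in Set.Ioi (Real.exp 1), ENNReal.ofReal (2 * (t ^ (p-1-b) * Real.log t ^ γ)) :=
          setLIntegral_mono' measurableSet_Ioi hpt
    _ = 2 * ∫⁻ t in Set.Ioi (Real.exp 1), ENNReal.ofReal (t ^ (p-1-b) * Real.log t ^ γ) := by
          simp_rw [ENNReal.ofReal_mul (by norm_num : (0:ℝ) ≤ 2), ENNReal.ofReal_ofNat]
          rw [lintegral_const_mul' _ _ (by simp)]
    _ ≤ 2 * ENNReal.ofReal (A * s ^ (-(γ+1))) := by
          apply mul_le_mul' le_rfl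
          exact aux_tail γ hγ s (p-1-b) hs0 hs1 (by linarith)
    _ = ENNReal.ofReal (2 * (A * s ^ (-(γ+1)))) := by
          rw [ENNReal.ofReal_mul (by norm_num : (0:ℝ) ≤ 2), ENNReal.ofReal_ofNat]
  -- full bound on the lintegral
  have hL : ∫⁻ ω, ENNReal.ofReal (|f ω| ^ p) ∂P ≤ ENNReal.ofReal (K * s ^ (-(γ+1))) := by
    rw [hlayer, hsplit]
    calc ENNReal.ofReal p * ((∫⁻ t in Set.Ioc 0 (Real.exp 1),
            P {a | t ≤ |f a|} * ENNReal.ofReal (t ^ (p-1)))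
          + ∫⁻ t in Set.Ioi (Real.exp 1), P {a | t ≤ |f a|} * ENNReal.ofReal (t ^ (p-1)))
        ≤ ENNReal.ofReal p * (ENNReal.ofReal (Real.exp 1 ^ b)
            + ENNReal.ofReal (2 * (A * s ^ (-(γ+1))))) :=
          mul_le_mul' le_rfl (add_le_add hI1 hI2)
    _ = ENNReal.ofReal (p * (Real.exp 1 ^ b + 2 * (A * s ^ (-(γ+1))))) := by
          rw [← ENNReal.ofReal_add (by positivity) (by positivity),
            ← ENNReal.ofReal_mul hp0.le]
    _ ≤ ENNReal.ofReal (K * s ^ (-(γ+1))) := by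
          apply ENNReal.ofReal_le_ofReal
          rw [hK_def]
          have h1 : p * Real.exp 1 ^ b ≤ b * Real.exp 1 ^ b * s ^ (-(γ+1)) := by
            calc p * Real.exp 1 ^ b ≤ b * Real.exp 1 ^ b :=
                  mul_le_mul_of_nonneg_right hpb.le (by positivity)
            _ = b * Real.exp 1 ^ b * 1 := (mul_one _).symm
            _ ≤ b * Real.exp 1 ^ b * s ^ (-(γ+1)) :=
                  mul_le_mul_of_nonneg_left hspow1 (by positivity)
          have h2 : p * (2 * (A * s ^ (-(γ+1)))) ≤ b * (2 * A) * s ^ (-(γ+1)) := by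
            have h2' := mul_le_mul_of_nonneg_right hpb.le
              (by positivity : (0:ℝ) ≤ 2 * (A * s ^ (-(γ+1))))
            nlinarith [h2']
          nlinarith [h1, h2]
  -- from lintegral to integral
  have hmeas2 : AEStronglyMeasurable (fun ω => |f ω| ^ p) P :=
    ((Real.continuous_rpow_const (by linarith : (0:ℝ) ≤ p)).measurable.comp
      hf.abs).aestronglyMeasurable
  have hnnae : 0 ≤ᵐ[P] fun ω => |f ω| ^ p :=
    Filter.Eventually.of_forall fun ω => Real.rpow_nonneg (abs_nonneg _) _
  have hInt : ∫ ω, |f ω| ^ p ∂P = (∫⁻ ω, ENNReal.ofReal (|f ω| ^ p) ∂P).toReal :=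
    integral_eq_lintegral_of_nonneg_ae hnnae hmeas2
  have hKs : (0:ℝ) ≤ K * s ^ (-(γ+1)) := by positivity
  have hIbound : ∫ ω, |f ω| ^ p ∂P ≤ K * s ^ (-(γ+1)) := by
    rw [hInt]
    exact ENNReal.toReal_le_of_le_ofReal hKs hL
  have hInn : 0 ≤ ∫ ω, |f ω| ^ p ∂P :=
    integral_nonneg fun ω => Real.rpow_nonneg (abs_nonneg _) _
  -- the final elementary estimate
  have hfinal : s ^ (-(γ+1)/p) ≤ D * (b-p) ^ (-(γ+1)/b) := by
    have hDnn : (0:ℝ) ≤ D := by linarith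
    rcases le_or_gt (b-p) 1 with hcase | hcase
    · have hs_eq : s = b - p := min_eq_left hcase
      rw [hs_eq]
      have key : (b-p) ^ (-(γ+1)/p) = (b-p) ^ (-(γ+1)/b) * (b-p) ^ (-(γ+1)/p + (γ+1)/b) := by
        rw [← Real.rpow_add hx0]; congr 1; ring
      rw [key]
      have hX : (b-p) ^ (-(γ+1)/p + (γ+1)/b) ≤ D := by
        rw [Real.rpow_def_of_pos hx0]
        have hpb : (1:ℝ) ≤ p * b := by nlinarith
        have hlog : Real.log (b-p) * (-(γ+1)/p + (γ+1)/b) ≤ γ + 1 := by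
          have hlx : -((b-p) * Real.log (b-p)) ≤ 1 := neg_mul_log_le_one hx0
          have hexp : -(γ+1)/p + (γ+1)/b = -((γ+1) * (b-p) / (p*b)) := by
            field_simp
            ring
          rw [hexp]
          have h5 : Real.log (b-p) * (-((γ+1)*(b-p)/(p*b)))
              = ((γ+1)/(p*b)) * (-((b-p) * Real.log (b-p))) := by ring
          rw [h5]
          have h6 : ((γ+1)/(p*b)) * (-((b-p) * Real.log (b-p))) ≤ ((γ+1)/(p*b)) * 1 :=
            mul_le_mul_of_nonneg_left hlx (by positivity)
          have h7 : (γ+1)/(p*b) ≤ γ+1 := by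
            have hpb1 : (0:ℝ) ≤ p*b - 1 := by nlinarith
            rw [div_le_iff₀ (by positivity : (0:ℝ) < p*b)]
            nlinarith [mul_nonneg hγ1.le hpb1]
          linarith
        calc Real.exp (Real.log (b-p) * (-(γ+1)/p + (γ+1)/b)) ≤ Real.exp (γ+1) :=
              Real.exp_le_exp.mpr hlog
        _ ≤ D := le_max_left _ _
      calc (b-p) ^ (-(γ+1)/b) * (b-p) ^ (-(γ+1)/p + (γ+1)/b)
          ≤ (b-p) ^ (-(γ+1)/b) * D :=
            mul_le_mul_of_nonneg_left hX (Real.rpow_nonneg hx0.le _)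
      _ = D * (b-p) ^ (-(γ+1)/b) := mul_comm _ _
    · have hs_eq : s = 1 := min_eq_right hcase.le
      rw [hs_eq, Real.one_rpow]
      have hb1' : (0:ℝ) < b - 1 := by linarith
      have hexp_np : -(γ+1)/b ≤ 0 :=
        div_nonpos_of_nonpos_of_nonneg (by linarith) (by linarith)
      have h8 : (b-1) ^ (-(γ+1)/b) ≤ (b-p) ^ (-(γ+1)/b) :=
        Real.rpow_le_rpow_of_nonpos hx0 (by linarith) hexp_np
      have h9 : (b-1) ^ ((γ+1)/b) ≤ D :=
        le_trans (le_max_right _ _) (le_max_right _ _)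
      calc (1:ℝ) = (b-1) ^ ((γ+1)/b) * (b-1) ^ (-(γ+1)/b) := by
            rw [← Real.rpow_add hb1', show (γ+1)/b + -(γ+1)/b = 0 by ring, Real.rpow_zero]
      _ ≤ D * (b-p) ^ (-(γ+1)/b) :=
            mul_le_mul h9 h8 (Real.rpow_nonneg hb1'.le _) hDnn
  -- conclude
  calc (∫ ω, |f ω| ^ p ∂P) ^ (1/p)
      ≤ (K * s ^ (-(γ+1))) ^ (1/p) := Real.rpow_le_rpow hInn hIbound (by positivity)
  _ = K ^ (1/p) * (s ^ (-(γ+1))) ^ (1/p) :=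
        Real.mul_rpow (by linarith) (Real.rpow_nonneg hs0.le _)
  _ ≤ K * (s ^ (-(γ+1))) ^ (1/p) := by
        apply mul_le_mul_of_nonneg_right _ (Real.rpow_nonneg (Real.rpow_nonneg hs0.le _) _)
        calc K ^ (1/p) ≤ K ^ (1:ℝ) :=
              Real.rpow_le_rpow_of_exponent_le hK1 ((div_le_one hp0).mpr hp1)
        _ = K := Real.rpow_one K
  _ = K * s ^ (-(γ+1)/p) := by
        rw [← Real.rpow_mul hs0.le, show -(γ+1) * (1/p) = -(γ+1)/p by ring]
  _ ≤ K * (D * (b-p) ^ (-(γ+1)/b)) :=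
        mul_le_mul_of_nonneg_left hfinal (by linarith)
  _ = K * D * (b-p) ^ (-(γ+1)/b) := by ring
  _ = K * D * (b-p) ^ (-(γ+1) / b) := rfl
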